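/- Let (x(t,x_0)) be a Markov process on X with E[ψ(x(t,x_0))] ≤ C ψ(x_0) for t ∈ [0,ε]. Then for every f ∈ 𝓑^ψ(X_{w*}) and every x_0 ∈ X, lim_{t→0+} E[f(x(t,x_0))] = f(x_0), provided the trajectories t ↦ x(t,x_0) are right-continuous in the weak-* topology. -/

import Mathlib

open MeasureTheory Filter Topology

/-- `f` is a bounded continuous function. -/
def MemCb {X : Type*} [TopologicalSpace X] (g : X → ℝ) : Prop :=
  Continuous g ∧ ∃ M : ℝ, ∀ x, |g x| ≤ M

/-- `f ∈ 𝓑^ψ(X)`: `f` lies in the `‖·‖_ψ`-closure of the bounded continuous functions. -/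
def MemBpsi {X : Type*} [TopologicalSpace X] (ψ : X → ℝ) (f : X → ℝ) : Prop :=
  ∀ ε > (0 : ℝ), ∃ g : X → ℝ, MemCb g ∧ ∀ x, (ψ x)⁻¹ * |f x - g x| ≤ ε

set_option maxHeartbeats 1000000 in
/-- Let `(x(t,x₀))` be a Markov process on the weighted space `(X, ψ)` with
`E[ψ(x(t,x₀))] ≤ C ψ(x₀)` for `t ∈ [0,ε]` and trajectories that are right-continuous at `0`.
Then for every `f ∈ 𝓑^ψ(X)` and every `x₀`, `E[f(x(t,x₀))] → f(x₀)` as `t → 0+`. -/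
theorem markov_pointwise_continuity_at_zero
    {X : Type*} [TopologicalSpace X] [T2Space X] [CompletelyRegularSpace X]
    {Ω : Type*} [MeasurableSpace Ω] (μ : Measure Ω) [IsProbabilityMeasure μ]
    (ψ : X → ℝ) (hψpos : ∀ p, 0 < ψ p)
    (hcomp : ∀ R > (0 : ℝ), IsCompact {p : X | ψ p ≤ R})
    (C ε : ℝ) (hC : 0 < C) (hε : 0 < ε)
    (x : ℝ → X → Ω → X)
    (hzero : ∀ (x₀ : X) (ω : Ω), x 0 x₀ ω = x₀)
    (hrc : ∀ (x₀ : X) (ω : Ω),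
      Tendsto (fun t => x t x₀ ω) (𝓝[>] (0 : ℝ)) (𝓝 x₀))
    (hψint : ∀ x₀ : X, ∀ t ∈ Set.Icc (0 : ℝ) ε,
      Integrable (fun ω => ψ (x t x₀ ω)) μ)
    (hbound : ∀ x₀ : X, ∀ t ∈ Set.Icc (0 : ℝ) ε,
      ∫ ω, ψ (x t x₀ ω) ∂μ ≤ C * ψ x₀)
    (f : X → ℝ) (hf : MemBpsi ψ f)
    (hfmeas : ∀ (t : ℝ) (x₀ : X), AEStronglyMeasurable (fun ω => f (x t x₀ ω)) μ) :
    ∀ x₀ : X,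
      Tendsto (fun t => ∫ ω, f (x t x₀ ω) ∂μ) (𝓝[>] (0 : ℝ)) (𝓝 (f x₀)) := by
  intro x₀
  rw [Metric.tendsto_nhds]
  intro δ hδ
  have hψ0 : (0:ℝ) < ψ x₀ := hψpos x₀
  have hCψ : (0:ℝ) < C * ψ x₀ := mul_pos hC hψ0
  -- first approximation, for tail bounds
  set ε₀ : ℝ := δ / (4 * (C * ψ x₀ + 1)) with hε₀def
  have hε₀pos : 0 < ε₀ := by positivity
  obtain ⟨g₀, ⟨hg₀c, M₀, hM₀⟩, hg₀⟩ := hf ε₀ hε₀pos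
  have hM₀0 : 0 ≤ M₀ := le_trans (abs_nonneg _) (hM₀ x₀)
  have hfg₀ : ∀ p, |f p - g₀ p| ≤ ε₀ * ψ p := by
    intro p
    have h := hg₀ p
    rw [inv_mul_le_iff₀ (hψpos p)] at h
    linarith [h]
  have hfbd : ∀ p, |f p| ≤ M₀ + ε₀ * ψ p := by
    intro p
    have h1 := hfg₀ p
    have h2 := hM₀ p
    have h3 : |f p| ≤ |f p - g₀ p| + |g₀ p| := by
      calc |f p| = |(f p - g₀ p) + g₀ p| := by ring_nf
        _ ≤ |f p - g₀ p| + |g₀ p| := abs_add_le _ _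
    linarith
  set K : ℝ := M₀ + |f x₀| with hKdef
  have hK0 : 0 ≤ K := by positivity
  -- the truncation radius
  set R : ℝ := (4 * K * (C * ψ x₀) + 1) / δ with hRdef
  have hR : 0 < R := by positivity
  have hRle : K * ((C * ψ x₀) / R) ≤ δ / 4 := by
    rw [mul_div_assoc']
    rw [div_le_iff₀ hR]
    have h2 : δ / 4 * R = (4 * K * (C * ψ x₀) + 1) / 4 := by
      rw [hRdef]; field_simp
    rw [h2]
    linarith
  -- second approximation, adapted to the radius
  set ε₁ : ℝ := δ / (8 * (R + 1 + ψ x₀)) with hε₁def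
  have hε₁pos : 0 < ε₁ := by positivity
  obtain ⟨g₁, ⟨hg₁c, M₁, hM₁⟩, hg₁⟩ := hf ε₁ hε₁pos
  have hM₁0 : 0 ≤ M₁ := le_trans (abs_nonneg _) (hM₁ x₀)
  have hfg₁ : ∀ p, |f p - g₁ p| ≤ ε₁ * ψ p := by
    intro p
    have h := hg₁ p
    rw [inv_mul_le_iff₀ (hψpos p)] at h
    linarith [h]
  set a : ℝ := ε₁ * (R + 1 + ψ x₀) with hadef
  have ha : a = δ / 8 := by
    rw [hadef, hε₁def]
    field_simp
  have ha0 : 0 ≤ a := by rw [ha]; positivity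
  -- the cutoff function
  set χ : ℝ → ℝ := fun s => min 1 (max 0 (R + 1 - s)) with hχdef
  have hχc : Continuous χ := by
    rw [hχdef]; fun_prop
  have hχ0 : ∀ s, 0 ≤ χ s := fun s => le_min one_pos.le (le_max_left _ _)
  have hχ1 : ∀ s, χ s ≤ 1 := fun s => min_le_left _ _
  have hχone : ∀ s ≤ R, χ s = 1 := by
    intro s hs
    have h1 : (1:ℝ) ≤ R + 1 - s := by linarith
    simp only [hχdef]
    rw [max_eq_right (by linarith : (0:ℝ) ≤ R + 1 - s), min_eq_left h1]
  have hχzero : ∀ s, R + 1 ≤ s → χ s = 0 := by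
    intro s hs
    simp only [hχdef]
    rw [max_eq_left (by linarith : R + 1 - s ≤ 0)]
    exact min_eq_right one_pos.le
  -- the families of functions
  set G : ℝ → Ω → ℝ := fun t ω => χ (ψ (x t x₀ ω)) * |f (x t x₀ ω) - f x₀| with hGdef
  set H : ℝ → Ω → ℝ := fun t ω => max (G t ω - a) 0 with hHdef
  set T : ℝ → Ω → ℝ := fun t ω => (1 - χ (ψ (x t x₀ ω))) * |f (x t x₀ ω) - f x₀| with hTdef
  have hGnn : ∀ t ω, 0 ≤ G t ω := fun t ω =>
    mul_nonneg (hχ0 _) (abs_nonneg _)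
  have hHnn : ∀ t ω, 0 ≤ H t ω := fun t ω => le_max_right _ _
  -- uniform bound for G (hence H)
  set B : ℝ := M₁ + ε₁ * (R + 1) + |f x₀| with hBdef
  have hB0 : 0 ≤ B := by positivity
  have hGB : ∀ t ω, G t ω ≤ B := by
    intro t ω
    rcases le_or_gt (ψ (x t x₀ ω)) (R + 1) with hc | hc
    · have h1 : G t ω ≤ |f (x t x₀ ω) - f x₀| :=
        mul_le_of_le_one_left (abs_nonneg _) (hχ1 _)
      have h2 : |f (x t x₀ ω) - f x₀| ≤ |f (x t x₀ ω)| + |f x₀| := abs_sub _ _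
      have h3 : |f (x t x₀ ω)| ≤ |f (x t x₀ ω) - g₁ (x t x₀ ω)| + |g₁ (x t x₀ ω)| := by
        calc |f (x t x₀ ω)| = |(f (x t x₀ ω) - g₁ (x t x₀ ω)) + g₁ (x t x₀ ω)| := by ring_nf
          _ ≤ _ := abs_add_le _ _
      have h4 := hfg₁ (x t x₀ ω)
      have h5 := hM₁ (x t x₀ ω)
      have h6 : ε₁ * ψ (x t x₀ ω) ≤ ε₁ * (R + 1) :=
        mul_le_mul_of_nonneg_left hc hε₁pos.le
      rw [hBdef]; linarith
    · have : G t ω = 0 := by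
        simp only [hGdef]; rw [hχzero _ hc.le, zero_mul]
      rw [this]; exact hB0
  have hHB : ∀ t ω, H t ω ≤ B := by
    intro t ω
    exact max_le (by linarith [hGB t ω]) hB0
  -- key pointwise bound for H, by continuity of g₁
  have hHg : ∀ t ω, H t ω ≤ |g₁ (x t x₀ ω) - g₁ x₀| := by
    intro t ω
    refine max_le ?_ (abs_nonneg _)
    rcases le_or_gt (ψ (x t x₀ ω)) (R + 1) with hc | hc
    · have h1 : G t ω ≤ |f (x t x₀ ω) - f x₀| :=
        mul_le_of_le_one_left (abs_nonneg _) (hχ1 _)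
      have h2 : |f (x t x₀ ω) - f x₀| ≤
          |f (x t x₀ ω) - g₁ (x t x₀ ω)| + |g₁ (x t x₀ ω) - f x₀| := abs_sub_le _ _ _
      have h3 : |g₁ (x t x₀ ω) - f x₀| ≤
          |g₁ (x t x₀ ω) - g₁ x₀| + |g₁ x₀ - f x₀| := abs_sub_le _ _ _
      have h4 := hfg₁ (x t x₀ ω)
      have h5 : |g₁ x₀ - f x₀| ≤ ε₁ * ψ x₀ := by
        rw [abs_sub_comm]; exact hfg₁ x₀
      have h6 : ε₁ * ψ (x t x₀ ω) ≤ ε₁ * (R + 1) :=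
        mul_le_mul_of_nonneg_left hc hε₁pos.le
      have ha' : a = ε₁ * (R + 1) + ε₁ * ψ x₀ := by rw [hadef]; ring
      linarith
    · have : G t ω = 0 := by
        simp only [hGdef]; rw [hχzero _ hc.le, zero_mul]
      rw [this]; linarith [abs_nonneg (g₁ (x t x₀ ω) - g₁ x₀)]
  -- the per-time integral facts
  have facts : ∀ t ∈ Set.Ioo (0:ℝ) ε, Integrable (H t) μ ∧
      |(∫ ω, f (x t x₀ ω) ∂μ) - f x₀| ≤
        (∫ ω, H t ω ∂μ) + a + K * ((C * ψ x₀) / R) + ε₀ * (C * ψ x₀) := by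
    intro t ht
    have htI : t ∈ Set.Icc (0:ℝ) ε := ⟨ht.1.le, ht.2.le⟩
    have hΨint : Integrable (fun ω => ψ (x t x₀ ω)) μ := hψint x₀ t htI
    have hΨm := hΨint.aestronglyMeasurable
    have hΨI : ∫ ω, ψ (x t x₀ ω) ∂μ ≤ C * ψ x₀ := hbound x₀ t htI
    have hFm := hfmeas t x₀
    have hFint : Integrable (fun ω => f (x t x₀ ω)) μ := by
      refine ((integrable_const M₀).add (hΨint.const_mul ε₀)).mono' hFm
        (Filter.Eventually.of_forall fun ω => ?_)
      rw [Real.norm_eq_abs]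
      exact hfbd _
    have habs : Integrable (fun ω => |f (x t x₀ ω) - f x₀|) μ :=
      (hFint.sub (integrable_const _)).abs
    have hχm : AEStronglyMeasurable (fun ω => χ (ψ (x t x₀ ω))) μ :=
      hχc.comp_aestronglyMeasurable hΨm
    have hGint : Integrable (G t) μ := by
      have := habs.bdd_mul hχm (c := 1) (Filter.Eventually.of_forall fun ω => by
        simp only [Real.norm_eq_abs]; rw [abs_of_nonneg (hχ0 _)]; exact hχ1 _)
      exact this
    have hHint : Integrable (H t) μ := (hGint.sub (integrable_const a)).pos_part
    have hTint : Integrable (T t) μ := by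
      have := habs.bdd_mul ((aestronglyMeasurable_const.sub hχm)) (c := 1) (Filter.Eventually.of_forall fun ω => by
        simp only [Pi.sub_apply, Real.norm_eq_abs]
        rw [abs_of_nonneg (by linarith [hχ1 (ψ (x t x₀ ω))] :
          (0:ℝ) ≤ 1 - χ (ψ (x t x₀ ω)))]
        linarith [hχ0 (ψ (x t x₀ ω))])
      exact this
    refine ⟨hHint, ?_⟩
    -- η = min 1 (ψ/R), the Markov cutoff
    have hηm : AEStronglyMeasurable (fun ω => min 1 (ψ (x t x₀ ω) / R)) μ := by
      have hcont : Continuous (fun s : ℝ => min 1 (s / R)) := by fun_prop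
      exact hcont.comp_aestronglyMeasurable hΨm
    have hηint : Integrable (fun ω => min 1 (ψ (x t x₀ ω) / R)) μ := by
      refine (integrable_const (1:ℝ)).mono' hηm (Filter.Eventually.of_forall fun ω => ?_)
      simp only [Real.norm_eq_abs]
      rw [abs_of_nonneg (le_min one_pos.le
        (div_nonneg (hψpos _).le hR.le))]
      exact min_le_left _ _
    have hηI : ∫ ω, min 1 (ψ (x t x₀ ω) / R) ∂μ ≤ (C * ψ x₀) / R := by
      calc ∫ ω, min 1 (ψ (x t x₀ ω) / R) ∂μ
          ≤ ∫ ω, ψ (x t x₀ ω) / R ∂μ :=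
            integral_mono hηint (hΨint.div_const R) (fun ω => min_le_right _ _)
        _ = (∫ ω, ψ (x t x₀ ω) ∂μ) / R := integral_div _ _
        _ ≤ (C * ψ x₀) / R := by gcongr
    -- tail bound
    have hTptwise : ∀ ω, T t ω ≤ K * min 1 (ψ (x t x₀ ω) / R) + ε₀ * ψ (x t x₀ ω) := by
      intro ω
      rcases le_or_gt (ψ (x t x₀ ω)) R with hc | hc
      · have : T t ω = 0 := by
          simp only [hTdef]; rw [hχone _ hc]; ring
        rw [this]
        have h1 : 0 ≤ min 1 (ψ (x t x₀ ω) / R) :=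
          le_min one_pos.le (div_nonneg (hψpos _).le hR.le)
        have h2 : 0 ≤ ε₀ * ψ (x t x₀ ω) := mul_nonneg hε₀pos.le (hψpos _).le
        nlinarith [hK0]
      · have hη1 : min 1 (ψ (x t x₀ ω) / R) = 1 := by
          rw [min_eq_left]
          rw [le_div_iff₀ hR]
          linarith
        rw [hη1, mul_one]
        have h1 : T t ω ≤ |f (x t x₀ ω) - f x₀| :=
          mul_le_of_le_one_left (abs_nonneg _)
            (by linarith [hχ0 (ψ (x t x₀ ω))])
        have h2 : |f (x t x₀ ω) - f x₀| ≤ |f (x t x₀ ω)| + |f x₀| := abs_sub _ _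
        have h3 := hfbd (x t x₀ ω)
        rw [hKdef]
        linarith
    have hTI : ∫ ω, T t ω ∂μ ≤ K * ((C * ψ x₀) / R) + ε₀ * (C * ψ x₀) := by
      calc ∫ ω, T t ω ∂μ
          ≤ ∫ ω, (K * min 1 (ψ (x t x₀ ω) / R) + ε₀ * ψ (x t x₀ ω)) ∂μ :=
            integral_mono hTint ((hηint.const_mul K).add (hΨint.const_mul ε₀)) hTptwise
        _ = K * (∫ ω, min 1 (ψ (x t x₀ ω) / R) ∂μ) + ε₀ * (∫ ω, ψ (x t x₀ ω) ∂μ) := by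
            rw [integral_add (hηint.const_mul K) (hΨint.const_mul ε₀),
              integral_const_mul, integral_const_mul]
        _ ≤ K * ((C * ψ x₀) / R) + ε₀ * (C * ψ x₀) :=
            add_le_add (mul_le_mul_of_nonneg_left hηI hK0)
              (mul_le_mul_of_nonneg_left hΨI hε₀pos.le)
    -- main part bound
    have hGI : ∫ ω, G t ω ∂μ ≤ (∫ ω, H t ω ∂μ) + a := by
      calc ∫ ω, G t ω ∂μ ≤ ∫ ω, (H t ω + a) ∂μ := by
            refine integral_mono hGint (hHint.add (integrable_const a)) (fun ω => ?_)
            have : G t ω - a ≤ H t ω := le_max_left _ _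
            linarith
        _ = (∫ ω, H t ω ∂μ) + a := by
            rw [integral_add hHint (integrable_const a), integral_const]
            simp
    -- splitting
    have hsplit : ∫ ω, |f (x t x₀ ω) - f x₀| ∂μ = (∫ ω, G t ω ∂μ) + ∫ ω, T t ω ∂μ := by
      rw [← integral_add hGint hTint]
      refine integral_congr_ae (Filter.Eventually.of_forall fun ω => ?_)
      simp only [hGdef, hTdef]; ring
    have hstart : |(∫ ω, f (x t x₀ ω) ∂μ) - f x₀| ≤ ∫ ω, |f (x t x₀ ω) - f x₀| ∂μ := by
      have h1 : (∫ ω, f (x t x₀ ω) ∂μ) - f x₀ = ∫ ω, (f (x t x₀ ω) - f x₀) ∂μ := by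
        rw [integral_sub hFint (integrable_const _), integral_const]
        simp
      rw [h1]
      have := norm_integral_le_integral_norm (μ := μ) (fun ω => f (x t x₀ ω) - f x₀)
      simpa [Real.norm_eq_abs] using this
    calc |(∫ ω, f (x t x₀ ω) ∂μ) - f x₀|
        ≤ ∫ ω, |f (x t x₀ ω) - f x₀| ∂μ := hstart
      _ = (∫ ω, G t ω ∂μ) + ∫ ω, T t ω ∂μ := hsplit
      _ ≤ ((∫ ω, H t ω ∂μ) + a) + (K * ((C * ψ x₀) / R) + ε₀ * (C * ψ x₀)) :=
          add_le_add hGI hTI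
      _ = (∫ ω, H t ω ∂μ) + a + K * ((C * ψ x₀) / R) + ε₀ * (C * ψ x₀) := by ring
  -- dominated convergence for H
  have hmem : Set.Ioo (0:ℝ) ε ∈ 𝓝[>] (0:ℝ) := Ioo_mem_nhdsGT_of_mem ⟨le_refl 0, hε⟩
  have hDCT : Tendsto (fun t => ∫ ω, H t ω ∂μ) (𝓝[>] (0:ℝ)) (𝓝 0) := by
    have hmeasH : ∀ᶠ t in 𝓝[>] (0:ℝ), AEStronglyMeasurable (H t) μ := by
      filter_upwards [hmem] with t ht
      exact (facts t ht).1.aestronglyMeasurable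
    have hbnd : ∀ᶠ t in 𝓝[>] (0:ℝ), ∀ᵐ ω ∂μ, ‖H t ω‖ ≤ B :=
      Filter.Eventually.of_forall fun t => Filter.Eventually.of_forall fun ω => by
        rw [Real.norm_eq_abs, abs_of_nonneg (hHnn t ω)]
        exact hHB t ω
    have hlim : ∀ᵐ ω ∂μ, Tendsto (fun t => H t ω) (𝓝[>] (0:ℝ)) (𝓝 0) := by
      refine Filter.Eventually.of_forall fun ω => ?_
      have h1 : Tendsto (fun t => g₁ (x t x₀ ω)) (𝓝[>] (0:ℝ)) (𝓝 (g₁ x₀)) :=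
        (hg₁c.continuousAt.tendsto).comp (hrc x₀ ω)
      have h2 : Tendsto (fun t => |g₁ (x t x₀ ω) - g₁ x₀|) (𝓝[>] (0:ℝ)) (𝓝 0) := by
        have h3 : Tendsto (fun t => g₁ (x t x₀ ω) - g₁ x₀) (𝓝[>] (0:ℝ))
            (𝓝 (g₁ x₀ - g₁ x₀)) := h1.sub tendsto_const_nhds
        rw [sub_self] at h3
        simpa using h3.abs
      exact squeeze_zero (fun t => hHnn t ω) (fun t => hHg t ω) h2
    have := tendsto_integral_filter_of_dominated_convergence (μ := μ)
      (F := H) (f := fun _ : Ω => (0:ℝ)) (fun _ => B) hmeasH hbnd (integrable_const B) hlim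
    simpa using this
  have hev : ∀ᶠ t in 𝓝[>] (0:ℝ), ∫ ω, H t ω ∂μ < δ / 8 :=
    hDCT.eventually_lt_const (by positivity)
  -- numeric bound for the ε₀-term
  have hε₀le : ε₀ * (C * ψ x₀) ≤ δ / 4 := by
    have h1 : ε₀ * (C * ψ x₀ + 1) = δ / 4 := by
      rw [hε₀def]; field_simp
    have h2 : ε₀ * (C * ψ x₀) + ε₀ = δ / 4 := by rw [← h1]; ring
    linarith [hε₀pos]
  -- conclusion
  filter_upwards [hmem, hev] with t ht hH
  rw [Real.dist_eq]
  have hkey := (facts t ht).2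
  rw [ha] at hkey
  calc |(∫ ω, f (x t x₀ ω) ∂μ) - f x₀|
      ≤ (∫ ω, H t ω ∂μ) + δ / 8 + K * ((C * ψ x₀) / R) + ε₀ * (C * ψ x₀) := hkey
    _ < δ / 8 + δ / 8 + δ / 4 + δ / 4 := by
        have := hRle
        have := hε₀le
        linarith
    _ < δ := by linarith
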